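/- Let R be a unique factorization domain which is not the two-element field 𝔽₂, and let M be a free R-module. Then M ↛ (1)_2^Span: there exists a colouring c : M → {0,1} such that for no nonzero submodule N ⊆ M is the set N \ {0} monochromatic for c. -/

import Mathlib

private lemma finset_inf'_add_one {ι : Type*} (s : Finset ι) (hs : s.Nonempty) (f : ι → ℕ) :
    s.inf' hs (fun i => f i + 1) = s.inf' hs f + 1 := by
  apply le_antisymm
  · obtain ⟨i0, hi0, h⟩ := s.exists_mem_eq_inf' hs f
    calc s.inf' hs (fun i => f i + 1) ≤ f i0 + 1 := Finset.inf'_le _ hi0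
      _ = s.inf' hs f + 1 := by rw [h]
  · exact Finset.le_inf' _ _ fun i hi => Nat.add_le_add_right (Finset.inf'_le _ hi) 1

private lemma finset_max'_eq_of_eq {ι : Type*} [LinearOrder ι] {s t : Finset ι}
    (hs : s.Nonempty) (ht : t.Nonempty) (h : s = t) : s.max' hs = t.max' ht := by
  subst h; rfl

/-- If `R` is a unique factorization domain which is not the
two-element field `𝔽₂`, and `M` is a free `R`-module, then `M ↛ (1)_2^Span`: there is a
colouring `c : M → {0,1}` such that for no nonzero submodule `N ⊆ M` is `N \ {0}`
monochromatic. -/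
theorem stmt_15 (R : Type*) [CommRing R] [IsDomain R] [UniqueFactorizationMonoid R]
    (hR : ¬ Nonempty (R ≃+* ZMod 2))
    (M : Type*) [AddCommGroup M] [Module R M] [Module.Free R M] :
    ∃ c : M → Fin 2, ∀ N : Submodule R M, N ≠ ⊥ →
      ¬ ∃ k, ∀ x ∈ N, x ≠ 0 → c x = k := by
  classical
  suffices h : ∃ c : M → Fin 2, ∀ x : M, x ≠ 0 →
      ∃ r s : R, r • x ≠ 0 ∧ s • x ≠ 0 ∧ c (r • x) ≠ c (s • x) by
    obtain ⟨c, hc⟩ := h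
    refine ⟨c, fun N hN hmono => ?_⟩
    obtain ⟨k, hk⟩ := hmono
    obtain ⟨x, hxN, hx⟩ := (Submodule.ne_bot_iff N).mp hN
    obtain ⟨r, s, hr, hs, hne⟩ := hc x hx
    exact hne ((hk _ (N.smul_mem r hxN) hr).trans (hk _ (N.smul_mem s hxN) hs).symm)
  letI : LinearOrder (Module.Free.ChooseBasisIndex R M) :=
    IsWellOrder.linearOrder WellOrderingRel
  set b := Module.Free.chooseBasis R M with hb
  have hinj : ∀ x : M, x ≠ 0 → (b.repr x).support.Nonempty := fun x hx =>
    Finsupp.support_nonempty_iff.mpr (b.repr.map_ne_zero_iff.mpr hx)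
  have hsupp : ∀ (r : R), r ≠ 0 → ∀ x : M,
      (b.repr (r • x)).support = (b.repr x).support := by
    intro r hr x
    rw [map_smul, Finsupp.support_smul_eq hr]
  by_cases hfield : ∀ a : R, a ≠ 0 → IsUnit a
  · -- "field" case: every nonzero element is a unit; find u ∉ {0, 1}
    have hu : ∃ u : R, u ≠ 0 ∧ u ≠ 1 := by
      by_contra h
      push_neg at h
      have huniv : ∀ x : R, x = 0 ∨ x = 1 := fun x => or_iff_not_imp_left.mpr (h x)
      have h2 : (1 : R) + 1 = 0 := by
        rcases huniv (1 + 1) with h11 | h11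
        · exact h11
        · exfalso
          have : (1 : R) + 1 = 1 + 0 := by rw [h11, add_zero]
          exact one_ne_zero (add_left_cancel this)
      have e : R ≃+* ZMod 2 :=
        { toFun := fun x => if x = 0 then 0 else 1
          invFun := fun y => if y = 0 then 0 else 1
          left_inv := by
            intro x
            rcases huniv x with rfl | rfl
            · simp
            · simp [one_ne_zero]
          right_inv := by
            intro y
            have hy : y = 0 ∨ y = 1 := by revert y; decide
            rcases hy with rfl | rfl
            · simp
            · simp [one_ne_zero]
          map_mul' := by
            intro x y
            rcases huniv x with rfl | rfl <;> rcases huniv y with rfl | rfl <;>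
              simp [one_ne_zero]
          map_add' := by
            intro x y
            rcases huniv x with rfl | rfl <;> rcases huniv y with rfl | rfl <;>
              simp [h2, one_ne_zero] <;> decide }
      exact hR ⟨e⟩
    obtain ⟨u, hu0, hu1⟩ := hu
    refine ⟨fun x => if h : (b.repr x).support.Nonempty then
        (if b.repr x ((b.repr x).support.max' h) = 1 then 0 else 1) else 0, ?_⟩
    intro x hx
    have h0 := hinj x hx
    set i := (b.repr x).support.max' h0 with hi
    have ha : b.repr x i ≠ 0 :=
      Finsupp.mem_support_iff.mp ((b.repr x).support.max'_mem h0)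
    obtain ⟨r, hra⟩ := (hfield _ ha).exists_right_inv
    have hr0 : r ≠ 0 := by
      rintro rfl
      rw [mul_zero] at hra
      exact zero_ne_one hra
    have hur0 : u * r ≠ 0 := mul_ne_zero hu0 hr0
    refine ⟨r, u * r, smul_ne_zero hr0 hx, smul_ne_zero hur0 hx, ?_⟩
    have e1 : (b.repr (r • x)).support = (b.repr x).support := hsupp r hr0 x
    have e2 : (b.repr ((u * r) • x)).support = (b.repr x).support := hsupp _ hur0 x
    have h1 : (b.repr (r • x)).support.Nonempty := e1 ▸ h0
    have h2 : (b.repr ((u * r) • x)).support.Nonempty := e2 ▸ h0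
    have hm1 : (b.repr (r • x)).support.max' h1 = i := finset_max'_eq_of_eq h1 h0 e1
    have hm2 : (b.repr ((u * r) • x)).support.max' h2 = i := finset_max'_eq_of_eq h2 h0 e2
    have hc1 : b.repr (r • x) i = 1 := by
      rw [map_smul, Finsupp.smul_apply, smul_eq_mul, mul_comm, hra]
    have hc2 : b.repr ((u * r) • x) i = u := by
      rw [map_smul, Finsupp.smul_apply, smul_eq_mul, mul_assoc, mul_comm r, hra, mul_one]
    simp only [dif_pos h1, dif_pos h2, hm1, hm2, hc1, hc2, if_pos rfl, if_neg hu1]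
    decide
  · -- there is a prime p; colour by parity of the minimal multiplicity of p
    push_neg at hfield
    obtain ⟨a, ha0, hau⟩ := hfield
    obtain ⟨p, hpirr, -⟩ := WfDvdMonoid.exists_irreducible_factor hau ha0
    have hp : Prime p := (UniqueFactorizationMonoid.irreducible_iff_prime).mp hpirr
    have hp0 : p ≠ 0 := hp.ne_zero
    refine ⟨fun x => if h : (b.repr x).support.Nonempty then
        (if Even ((b.repr x).support.inf' h fun i => multiplicity p (b.repr x i))
          then 0 else 1) else 0, ?_⟩
    intro x hx
    have h0 := hinj x hx
    refine ⟨1, p, by simpa using hx, smul_ne_zero hp0 hx, ?_⟩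
    rw [one_smul]
    have e2 : (b.repr (p • x)).support = (b.repr x).support := hsupp p hp0 x
    have h2 : (b.repr (p • x)).support.Nonempty := e2 ▸ h0
    have hcoeff : ∀ i ∈ (b.repr (p • x)).support,
        multiplicity p (b.repr (p • x) i) = multiplicity p (b.repr x i) + 1 := by
      intro i hi
      rw [e2] at hi
      have hxi : b.repr x i ≠ 0 := Finsupp.mem_support_iff.mp hi
      have hco : b.repr (p • x) i = p * b.repr x i := by
        rw [map_smul, Finsupp.smul_apply, smul_eq_mul]
      rw [hco, multiplicity_mul hp
        (FiniteMultiplicity.of_prime_left hp (mul_ne_zero hp0 hxi)),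
        multiplicity_self, add_comm]
    have hw : ((b.repr (p • x)).support.inf' h2 fun i => multiplicity p (b.repr (p • x) i))
        = ((b.repr x).support.inf' h0 fun i => multiplicity p (b.repr x i)) + 1 := by
      rw [Finset.inf'_congr (H := h2) e2 hcoeff]
      exact finset_inf'_add_one _ _ _
    simp only [dif_pos h0, dif_pos h2, hw]
    by_cases he : Even ((b.repr x).support.inf' h0 fun i => multiplicity p (b.repr x i))
    · rw [if_pos he, if_neg (by simp [Nat.even_add_one, he])]
      decide
    · rw [if_neg he, if_pos (by simp [Nat.even_add_one, he])]
      decide
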